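/- The extreme points of the convex hull Ψ_{m,n} of the set { A ⊗ B : A ∈ Ω_m, B ∈ Ω_n } of Kronecker products of doubly stochastic matrices are exactly the matrices P ⊗ Q with P ∈ 𝒫_m and Q ∈ 𝒫_n. -/

import Mathlib

open Matrix Kronecker

open Finset

variable {p : Type*} [Fintype p] [DecidableEq p]

lemma permMatrix_apply' (σ : Equiv.Perm p) (i j : p) :
    σ.permMatrix ℝ i j = if j = σ i then 1 else 0 := by
  simp [Equiv.Perm.permMatrix, PEquiv.toMatrix_apply, Equiv.toPEquiv_apply, eq_comm]

lemma kron_perm_eq {a b : ℕ} (σ : Equiv.Perm (Fin a)) (τ : Equiv.Perm (Fin b)) :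
    (σ.permMatrix ℝ) ⊗ₖ (τ.permMatrix ℝ) = Equiv.Perm.permMatrix ℝ (Equiv.prodCongr σ τ) := by
  ext ⟨i1, i2⟩ ⟨j1, j2⟩
  simp only [kroneckerMap_apply, permMatrix_apply', Equiv.Perm.permMatrix,
    PEquiv.toMatrix_apply, Equiv.toPEquiv_apply, Equiv.prodCongr_apply, Prod.map,
    Option.mem_def, Option.some.injEq, Prod.mk.injEq]
  split_ifs <;> simp_all

lemma permMatrix_extreme (σ : Equiv.Perm p) :
    σ.permMatrix ℝ ∈ Set.extremePoints ℝ (doublyStochastic ℝ p : Set (Matrix p p ℝ)) := by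
  refine ⟨permMatrix_mem_doublyStochastic, fun x hx y hy hseg => ?_⟩
  obtain ⟨a, b, ha, hb, hab, hxy⟩ := hseg
  have key : ∀ z : Matrix p p ℝ, z ∈ doublyStochastic ℝ p →
      (∀ i j, j ≠ σ i → z i j = 0) → z = σ.permMatrix ℝ := by
    intro z hz h0
    ext i j
    rw [permMatrix_apply']
    split_ifs with h
    · subst h
      have := sum_row_of_mem_doublyStochastic hz i
      rwa [Finset.sum_eq_single (σ i) (fun k _ hk => h0 i k hk) (by simp)] at this
    · exact h0 i j h
  have hzero : ∀ i j, j ≠ σ i → x i j = 0 ∧ y i j = 0 := by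
    intro i j h
    have hx0 : (0:ℝ) ≤ x i j := nonneg_of_mem_doublyStochastic hx
    have hy0 : (0:ℝ) ≤ y i j := nonneg_of_mem_doublyStochastic hy
    have : a * x i j + b * y i j = 0 := by
      have := congrFun (congrFun hxy i) j
      simp only [Matrix.add_apply, Matrix.smul_apply, smul_eq_mul] at this
      rw [this, permMatrix_apply', if_neg h]
    constructor
    · nlinarith
    · nlinarith
  exact key x hx fun i j h => (hzero i j h).1

open Matrix Kronecker

/-- The extreme points of the convex hull `Ψ_{m,n}` of Kronecker products of
doubly stochastic matrices are exactly the Kronecker products of permutation matrices. -/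
theorem extremePoints_psi (m n : ℕ) :
    Set.extremePoints ℝ
        (convexHull ℝ {C : Matrix (Fin m × Fin n) (Fin m × Fin n) ℝ |
          ∃ A ∈ doublyStochastic ℝ (Fin m), ∃ B ∈ doublyStochastic ℝ (Fin n), C = A ⊗ₖ B})
      = {C | ∃ σ : Equiv.Perm (Fin m), ∃ τ : Equiv.Perm (Fin n),
          C = (σ.permMatrix ℝ) ⊗ₖ (τ.permMatrix ℝ)} := by
  set S : Set (Matrix (Fin m × Fin n) (Fin m × Fin n) ℝ) :=
    {C | ∃ A ∈ doublyStochastic ℝ (Fin m), ∃ B ∈ doublyStochastic ℝ (Fin n), C = A ⊗ₖ B} with hSdef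
  set T : Set (Matrix (Fin m × Fin n) (Fin m × Fin n) ℝ) :=
    {C | ∃ σ : Equiv.Perm (Fin m), ∃ τ : Equiv.Perm (Fin n),
      C = (σ.permMatrix ℝ) ⊗ₖ (τ.permMatrix ℝ)} with hTdef
  have hTS : T ⊆ S := by
    rintro C ⟨σ, τ, rfl⟩
    exact ⟨_, permMatrix_mem_doublyStochastic, _, permMatrix_mem_doublyStochastic, rfl⟩
  have hTDS : T ⊆ (doublyStochastic ℝ (Fin m × Fin n) : Set _) := by
    rintro C ⟨σ, τ, rfl⟩
    rw [kron_perm_eq]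
    exact permMatrix_mem_doublyStochastic
  have hS : S ⊆ convexHull ℝ T := by
    rintro C ⟨A, hA, B, hB, rfl⟩
    have hA' : A ∈ convexHull ℝ {x : Matrix (Fin m) (Fin m) ℝ | ∃ σ : Equiv.Perm (Fin m),
        σ.permMatrix ℝ = x} := by
      rw [← doublyStochastic_eq_convexHull_permMatrix]; exact hA
    have hB' : B ∈ convexHull ℝ {x : Matrix (Fin n) (Fin n) ℝ | ∃ τ : Equiv.Perm (Fin n),
        τ.permMatrix ℝ = x} := by
      rw [← doublyStochastic_eq_convexHull_permMatrix]; exact hB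
    let f : Matrix (Fin m) (Fin m) ℝ →ₗ[ℝ] Matrix (Fin m × Fin n) (Fin m × Fin n) ℝ :=
      (kroneckerBilinear (R := ℝ) (α := ℝ)).flip B
    have h1 : A ⊗ₖ B ∈ convexHull ℝ (f '' {x : Matrix (Fin m) (Fin m) ℝ |
        ∃ σ : Equiv.Perm (Fin m), σ.permMatrix ℝ = x}) := by
      rw [← LinearMap.image_convexHull]
      exact ⟨A, hA', rfl⟩
    refine (convexHull_min ?_ (convex_convexHull ℝ T)) h1
    rintro _ ⟨_, ⟨σ, rfl⟩, rfl⟩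
    let g : Matrix (Fin n) (Fin n) ℝ →ₗ[ℝ] Matrix (Fin m × Fin n) (Fin m × Fin n) ℝ :=
      kroneckerBilinear (R := ℝ) (α := ℝ) (σ.permMatrix ℝ)
    have h2 : f (σ.permMatrix ℝ) = g B := rfl
    rw [h2]
    have h3 : g B ∈ convexHull ℝ (g '' {x : Matrix (Fin n) (Fin n) ℝ |
        ∃ τ : Equiv.Perm (Fin n), τ.permMatrix ℝ = x}) := by
      rw [← LinearMap.image_convexHull]
      exact ⟨B, hB', rfl⟩
    refine convexHull_mono ?_ h3
    rintro _ ⟨_, ⟨τ, rfl⟩, rfl⟩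
    exact ⟨σ, τ, rfl⟩
  have hST : convexHull ℝ S = convexHull ℝ T := by
    refine le_antisymm (convexHull_min hS (convex_convexHull ℝ T)) (convexHull_mono hTS)
  rw [hST]
  apply Set.Subset.antisymm
  · exact extremePoints_convexHull_subset
  · rintro C hC
    refine inter_extremePoints_subset_extremePoints_of_subset
      (convexHull_min hTDS convex_doublyStochastic) ⟨subset_convexHull ℝ T hC, ?_⟩
    obtain ⟨σ, τ, rfl⟩ := hC
    rw [kron_perm_eq]
    exact permMatrix_extreme _
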